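/- Let (u, η) be a solitary wave solution of the stationary system β²η'' = η + u²/2, β²u'' = u(1+η) with u(x) < √2 for all x. Then u = √2·η on ℝ. -/

import Mathlib

open Filter Set

/-- Maximum principle helper: a C² function tending to 0 at infinity whose second
derivative is positive wherever the function is positive must be nonpositive. -/
lemma aux_max_principle (f : ℝ → ℝ) (hf : ContDiff ℝ 2 f)
    (h0 : Tendsto f (cocompact ℝ) (nhds 0))
    (hpos : ∀ x, 0 < f x → 0 < deriv (deriv f) x) : ∀ x, f x ≤ 0 := by
  by_contra hc
  push_neg at hc
  obtain ⟨x₁, hx₁⟩ := hc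
  -- outside a compact set, f < f x₁
  have hev : ∀ᶠ x in cocompact ℝ, f x < f x₁ := h0.eventually (eventually_lt_nhds hx₁)
  obtain ⟨K, hK, hKsub⟩ := Filter.mem_cocompact.mp hev
  -- global maximum on K ∪ {x₁}
  have hK' : IsCompact (K ∪ {x₁}) := hK.union isCompact_singleton
  obtain ⟨x₀, hx₀K, hmax⟩ := hK'.exists_isMaxOn ⟨x₁, Or.inr rfl⟩
    hf.continuous.continuousOn
  have hx₁mem : x₁ ∈ K ∪ {x₁} := Or.inr rfl
  have hglob : ∀ y, f y ≤ f x₀ := by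
    intro y
    by_cases hy : y ∈ K ∪ {x₁}
    · exact hmax hy
    · have hyK : y ∉ K := fun h => hy (Or.inl h)
      have : f y < f x₁ := hKsub hyK
      exact this.le.trans (hmax hx₁mem)
  have hfx₀ : 0 < f x₀ := hx₁.trans_le (hmax hx₁mem)
  have hlocmax : IsLocalMax f x₀ := Filter.Eventually.of_forall hglob
  have h1 : deriv f x₀ = 0 := hlocmax.deriv_eq_zero
  have h2 : 0 < deriv (deriv f) x₀ := hpos _ hfx₀
  -- f' is differentiable
  have hf' : ContDiff ℝ 1 (deriv f) := by
    have : ContDiff ℝ ((1 : ℕ) + 1) f := by exact_mod_cast hf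
    exact (contDiff_succ_iff_deriv.mp this).2.2
  have hdf : Differentiable ℝ f := hf.differentiable (by norm_num)
  have hd2 : HasDerivAt (deriv f) (deriv (deriv f) x₀) x₀ :=
    ((hf'.differentiable one_ne_zero) x₀).hasDerivAt
  -- slope of f' is eventually positive to the right of x₀
  have hslope : Tendsto (slope (deriv f) x₀) (nhdsWithin x₀ {x₀}ᶜ)
      (nhds (deriv (deriv f) x₀)) := hasDerivAt_iff_tendsto_slope.mp hd2
  have hevs : ∀ᶠ x in nhdsWithin x₀ {x₀}ᶜ, 0 < slope (deriv f) x₀ x :=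
    hslope.eventually (eventually_gt_nhds h2)
  have hevs' : ∀ᶠ x in nhdsWithin x₀ (Ioi x₀), 0 < slope (deriv f) x₀ x :=
    hevs.filter_mono (nhdsWithin_mono _ (fun x hx => ne_of_gt hx))
  obtain ⟨b, hb, hIoo⟩ := (mem_nhdsGT_iff_exists_Ioo_subset).mp hevs'
  -- on (x₀, b), f' > 0
  have hderivpos : ∀ x ∈ Ioo x₀ b, 0 < deriv f x := by
    intro x hx
    have hs := hIoo hx
    have hxx : (0 : ℝ) < x - x₀ := sub_pos.mpr hx.1
    simp only [Set.mem_setOf_eq] at hs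
    rw [slope_def_field, h1, sub_zero] at hs
    rcases div_pos_iff.mp hs with ⟨hnum, _⟩ | ⟨_, hden⟩
    · exact hnum
    · linarith
  -- hence f strictly increases on [x₀, b], contradicting the max
  have hmono : StrictMonoOn f (Icc x₀ b) := by
    apply strictMonoOn_of_deriv_pos (convex_Icc x₀ b) hf.continuous.continuousOn
    intro x hx
    rw [interior_Icc] at hx
    exact hderivpos x hx
  have hb' : x₀ < b := hb
  have hmid : x₀ < (x₀ + b) / 2 := by linarith
  have hmid' : (x₀ + b) / 2 ≤ b := by linarith
  have := hmono (left_mem_Icc.mpr hb'.le) ⟨hmid.le, hmid'⟩ hmid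
  exact absurd (hglob ((x₀ + b) / 2)) (not_le.mpr this)

theorem stmt_5 (β : ℝ) (hβ : 0 < β)
    (u η : ℝ → ℝ)
    (hu : ContDiff ℝ 2 u) (hη : ContDiff ℝ 2 η)
    (heqη : ∀ x, β^2 * deriv (deriv η) x = η x + (u x)^2 / 2)
    (hequ : ∀ x, β^2 * deriv (deriv u) x = u x * (1 + η x))
    (hu0 : Filter.Tendsto u (Filter.cocompact ℝ) (nhds 0))
    (hu0' : Filter.Tendsto (deriv u) (Filter.cocompact ℝ) (nhds 0))
    (hη0 : Filter.Tendsto η (Filter.cocompact ℝ) (nhds 0))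
    (hη0' : Filter.Tendsto (deriv η) (Filter.cocompact ℝ) (nhds 0))
    (hnontriv : ¬ (∀ x, u x = 0 ∧ η x = 0))
    (hlt : ∀ x, u x < Real.sqrt 2) :
    ∀ x : ℝ, u x = Real.sqrt 2 * η x := by
  set s : ℝ := Real.sqrt 2 with hs
  have hs2 : s * s = 2 := Real.mul_self_sqrt (by norm_num)
  have hspos : 0 < s := Real.sqrt_pos.mpr (by norm_num)
  set h : ℝ → ℝ := fun x => u x - s * η x with hdefh
  have hch : ContDiff ℝ 2 h := hu.sub (contDiff_const.mul hη)
  -- first derivative of h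
  have hderivh : deriv h = fun x => deriv u x - s * deriv η x := by
    funext x
    have h1 : DifferentiableAt ℝ u x := (hu.differentiable (by norm_num)) x
    have h2 : DifferentiableAt ℝ η x := (hη.differentiable (by norm_num)) x
    rw [hdefh]
    rw [deriv_fun_sub h1 (h2.const_mul s), deriv_const_mul s h2]
  -- second derivative of h
  have hu' : ContDiff ℝ 1 (deriv u) := by
    have : ContDiff ℝ ((1 : ℕ) + 1) u := by exact_mod_cast hu
    exact (contDiff_succ_iff_deriv.mp this).2.2
  have hη' : ContDiff ℝ 1 (deriv η) := by
    have : ContDiff ℝ ((1 : ℕ) + 1) η := by exact_mod_cast hη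
    exact (contDiff_succ_iff_deriv.mp this).2.2
  have hderiv2h : ∀ x, deriv (deriv h) x = deriv (deriv u) x - s * deriv (deriv η) x := by
    intro x
    rw [hderivh]
    have h1 : DifferentiableAt ℝ (deriv u) x := (hu'.differentiable one_ne_zero) x
    have h2 : DifferentiableAt ℝ (deriv η) x := (hη'.differentiable one_ne_zero) x
    rw [deriv_fun_sub h1 (h2.const_mul s), deriv_const_mul s h2]
  -- the key equation: β² h'' = (1 - u/√2) h, stated multiplied by s
  have hkey : ∀ x, s * (β^2 * deriv (deriv h) x) = (s - u x) * h x := by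
    intro x
    rw [hderiv2h x]
    have e1 := hequ x
    have e2 := heqη x
    have key : β ^ 2 * deriv (deriv u) x - s * (β ^ 2 * deriv (deriv η) x)
        = u x * (1 + η x) - s * (η x + u x ^ 2 / 2) := by rw [e1, e2]
    show s * (β ^ 2 * (deriv (deriv u) x - s * deriv (deriv η) x))
        = (s - u x) * (u x - s * η x)
    linear_combination s * key - (u x ^ 2 / 2) * hs2
  have hβ2 : 0 < β ^ 2 := by positivity
  -- coefficient positivity
  have hcoef : ∀ x, 0 < s - u x := fun x => sub_pos.mpr (hlt x)
  -- h'' > 0 where h > 0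
  have hposh : ∀ x, 0 < h x → 0 < deriv (deriv h) x := by
    intro x hx
    have hk := hkey x
    by_contra hD
    push_neg at hD
    have h1 : β ^ 2 * deriv (deriv h) x ≤ 0 := mul_nonpos_of_nonneg_of_nonpos hβ2.le hD
    have h2 : s * (β ^ 2 * deriv (deriv h) x) ≤ 0 := mul_nonpos_of_nonneg_of_nonpos hspos.le h1
    have h3 : 0 < (s - u x) * h x := mul_pos (hcoef x) hx
    linarith
  -- tendsto
  have hh0 : Tendsto h (cocompact ℝ) (nhds 0) := by
    have := hu0.sub (hη0.const_mul s)
    simpa using this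
  have hle : ∀ x, h x ≤ 0 := aux_max_principle h hch hh0 hposh
  -- now apply to -h
  have hchn : ContDiff ℝ 2 (fun x => -h x) := hch.neg
  have hderivneg : deriv (fun x => -h x) = fun x => -deriv h x := by
    funext x; exact deriv.neg
  have hposn : ∀ x, 0 < -h x → 0 < deriv (deriv fun x => -h x) x := by
    intro x hx
    rw [hderivneg]
    have : deriv (fun x => -deriv h x) x = -deriv (deriv h) x := deriv.neg
    rw [this]
    have hk := hkey x
    have hx' : h x < 0 := by linarith
    by_contra hD
    push_neg at hD
    have hD' : 0 ≤ deriv (deriv h) x := by linarith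
    have h1 : 0 ≤ β ^ 2 * deriv (deriv h) x := mul_nonneg hβ2.le hD'
    have h2 : 0 ≤ s * (β ^ 2 * deriv (deriv h) x) := mul_nonneg hspos.le h1
    have h3 : (s - u x) * h x < 0 := mul_neg_of_pos_of_neg (hcoef x) hx'
    linarith
  have hh0n : Tendsto (fun x => -h x) (cocompact ℝ) (nhds 0) := by
    simpa using hh0.neg
  have hge : ∀ x, -h x ≤ 0 := aux_max_principle _ hchn hh0n hposn
  intro x
  have h1 := hle x
  have h2 := hge x
  have : h x = 0 := le_antisymm h1 (by linarith)
  have : u x - s * η x = 0 := this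
  linarith
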